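/- Let Γ ⊂ GL(2, ℂ) be the unitary group of the hermitian form diag(-1, w) over ℤ[ζ] as in the quadrangle setting, i.e. Γ = {A ∈ GL(2, ℤ[ζ]) : diag(-1,w) = Aᵗ·diag(-1,w)·Ā}, where ζ = e^{2πi/m}, w(ζ) > 0 and w(ξ) < 0 for primitive m-th roots of unity ξ ∉ {ζ, ζ̄}. Then every A = [[a,b],[c,d]] ∈ Γ satisfies |a(ζ)| ≥ 1, and |a(ξ)| ≤ 1 together with |c(ξ)|² < (-w(ξ))^{-1} for every primitive m-th root of unity ξ ∉ {ζ, ζ̄} (where a(ξ), c(ξ) denote the Galois conjugates of a, c). Consequently Γ is a discrete subgroup of GL(2, ℂ). -/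

import Mathlib

open Polynomial Topology Filter

namespace Stmt19Aux

lemma aeval_conj (p : Polynomial ℤ) (z : ℂ) :
    aeval ((starRingEnd ℂ) z) p = (starRingEnd ℂ) (aeval z p) :=
  aeval_algHom_apply ((starRingEnd ℂ).toIntAlgHom) z p

lemma pow_pred_eq_conj {m : ℕ} (hm : m ≠ 0) {z : ℂ} (hz : z ^ m = 1) :
    z ^ (m - 1) = (starRingEnd ℂ) z := by
  have hz0 : z ≠ 0 := by
    intro h; rw [h, zero_pow hm] at hz; exact zero_ne_one hz
  have hn : ‖z‖ = 1 := Complex.norm_eq_one_of_pow_eq_one hz hm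
  have hm1 : m - 1 + 1 = m := Nat.succ_pred_eq_of_pos (Nat.pos_of_ne_zero hm)
  have h1 : z ^ (m - 1) * z = 1 := by
    rw [← pow_succ, hm1, hz]
  have h2 : (starRingEnd ℂ) z * z = 1 := by
    rw [mul_comm, Complex.mul_conj]
    norm_cast
    rw [Complex.normSq_eq_norm_sq, hn, one_pow]
  exact mul_right_cancel₀ hz0 (h1.trans h2.symm)

lemma comp_conj {m : ℕ} (hm : m ≠ 0) {z : ℂ} (hz : z ^ m = 1) (p : Polynomial ℤ) :
    aeval z (p.comp (X ^ (m - 1))) = (starRingEnd ℂ) (aeval z p) := by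
  rw [aeval_comp]
  simp only [map_pow, aeval_X]
  rw [pow_pred_eq_conj hm hz, aeval_conj]

lemma transfer {ζ : ℂ} {R : Subalgebra ℤ ℂ} (hR : R = Algebra.adjoin ℤ {ζ})
    (hζR : ζ ∈ R) (σ : R →+* ℂ) {ξ : ℂ} (hσ : σ ⟨ζ, hζR⟩ = ξ) (x : R) :
    ∃ p : Polynomial ℤ, (x : ℂ) = aeval ζ p ∧ σ x = aeval ξ p := by
  have hx : (x : ℂ) ∈ Algebra.adjoin ℤ {ζ} := hR ▸ x.2
  rw [Algebra.adjoin_singleton_eq_range_aeval] at hx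
  obtain ⟨p, hp0⟩ := hx
  have hp : Polynomial.aeval ζ p = (x : ℂ) := hp0
  refine ⟨p, hp.symm, ?_⟩
  have hxR : x = aeval (⟨ζ, hζR⟩ : R) p := by
    apply Subtype.ext
    rw [coe_aeval_mk_apply, hp]
  rw [hxR, ← hσ]
  exact (aeval_algHom_apply (σ.toIntAlgHom) (⟨ζ, hζR⟩ : R) p).symm

lemma eval_zero_of_zero {ζ ξ : ℂ} {R : Subalgebra ℤ ℂ} (hR : R = Algebra.adjoin ℤ {ζ})
    (hζR : ζ ∈ R) (σ : R →+* ℂ) (hσ : σ ⟨ζ, hζR⟩ = ξ) (pol : Polynomial ℤ)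
    (h : aeval ζ pol = 0) : aeval ξ pol = 0 := by
  have h0 : aeval (⟨ζ, hζR⟩ : R) pol = 0 := by
    apply Subtype.ext
    rw [coe_aeval_mk_apply, h]; rfl
  have h2 : aeval (σ.toIntAlgHom ⟨ζ, hζR⟩) pol = σ.toIntAlgHom (aeval (⟨ζ, hζR⟩ : R) pol) :=
    aeval_algHom_apply _ _ _
  rw [← hσ]
  show aeval (σ.toIntAlgHom ⟨ζ, hζR⟩) pol = 0
  rw [h2, h0, map_zero]

lemma sigma_ne_zero {ζ : ℂ} {R : Subalgebra ℤ ℂ} (hR : R = Algebra.adjoin ℤ {ζ})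
    (hζR : ζ ∈ R) (hint : IsIntegral ℤ ζ) (σ : R →+* ℂ) (x : R) (hx : (x : ℂ) ≠ 0) :
    σ x ≠ 0 := by
  have hxint : IsIntegral ℤ (x : ℂ) := by
    have : R ≤ integralClosure ℤ ℂ := by
      rw [hR]; exact Algebra.adjoin_le (by simpa [mem_integralClosure_iff] using hint)
    exact this x.2
  have hxint' : IsIntegral ℚ (x : ℂ) := hxint.tower_top
  obtain ⟨b, hb⟩ := IsLocalization.integerNormalization_map_to_map (nonZeroDivisors ℤ)
    (minpoly ℚ (x : ℂ))
  set P : Polynomial ℤ := IsLocalization.integerNormalization (nonZeroDivisors ℤ)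
    (minpoly ℚ (x : ℂ)) with hP
  have hb0 : (b : ℤ) ≠ 0 := nonZeroDivisors.coe_ne_zero b
  have hPx : aeval (x : ℂ) P = 0 := by
    have : aeval (x : ℂ) (P.map (algebraMap ℤ ℚ)) = 0 := by
      rw [hb, map_zsmul, minpoly.aeval, smul_zero]
    rwa [aeval_map_algebraMap] at this
  have hP0 : P.coeff 0 ≠ 0 := by
    intro h
    have h2 : algebraMap ℤ ℚ (P.coeff 0) = (b : ℤ) • (minpoly ℚ (x : ℂ)).coeff 0 := by
      have := congrArg (fun r => Polynomial.coeff r 0) hb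
      simpa using this
    rw [h, map_zero] at h2
    have := minpoly.coeff_zero_ne_zero hxint' hx
    have hb0' : ((b : ℤ) : ℚ) ≠ 0 := Int.cast_ne_zero.mpr hb0
    rw [zsmul_eq_mul] at h2
    exact this (by
      rcases mul_eq_zero.mp h2.symm with h | h
      · exact absurd h hb0'
      · exact h)
  have hPxR : aeval x P = 0 := by
    apply Subtype.ext
    have : ((aeval x P : R) : ℂ) = aeval (x : ℂ) P :=
      (aeval_algHom_apply R.val x P).symm
    rw [this, hPx]; rfl
  intro hσx
  have : aeval (σ x) P = 0 := by
    show aeval (σ.toIntAlgHom x) P = 0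
    rw [aeval_algHom_apply (σ.toIntAlgHom) x P, hPxR, map_zero]
  rw [hσx] at this
  have : ((P.coeff 0 : ℤ) : ℂ) = 0 := by
    rw [← this]
    simp [aeval_def, eval₂_at_zero]
  exact hP0 (by exact_mod_cast this)

/-- Transfers the hermitian-form relation to any embedding of `R`. -/
lemma rel_transfer {m : ℕ} (hm : m ≠ 0) {ζ ξ : ℂ} (hζm : ζ ^ m = 1) (hξm : ξ ^ m = 1)
    {R : Subalgebra ℤ ℂ} (hR : R = Algebra.adjoin ℤ {ζ}) (hζR : ζ ∈ R)
    (q : Polynomial ℚ) (x y : R) (s u v t : ℤ)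
    (hrel : (s : ℂ) * ((x : ℂ) * (starRingEnd ℂ) (x : ℂ))
      + aeval ζ q * ((u : ℂ) * ((y : ℂ) * (starRingEnd ℂ) (y : ℂ)) + (v : ℂ)) = (t : ℂ))
    (σ : R →+* ℂ) (hσ : σ ⟨ζ, hζR⟩ = ξ) :
    (s : ℂ) * (σ x * (starRingEnd ℂ) (σ x))
      + aeval ξ q * ((u : ℂ) * (σ y * (starRingEnd ℂ) (σ y)) + (v : ℂ)) = (t : ℂ) := by
  obtain ⟨px, hpx, hpxσ⟩ := transfer hR hζR σ hσ x
  obtain ⟨py, hpy, hpyσ⟩ := transfer hR hζR σ hσ y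
  obtain ⟨n, hn⟩ := IsLocalization.integerNormalization_map_to_map (nonZeroDivisors ℤ) q
  set pw : Polynomial ℤ := IsLocalization.integerNormalization (nonZeroDivisors ℤ) q with hpw
  have hw_eval : ∀ z : ℂ, aeval z pw = ((n : ℤ) : ℂ) * aeval z q := fun z => by
    rw [← aeval_map_algebraMap ℚ, hn, map_zsmul, zsmul_eq_mul]
  have hn0 : ((n : ℤ) : ℂ) ≠ 0 := Int.cast_ne_zero.mpr (nonZeroDivisors.coe_ne_zero n)
  set K := m - 1 with hK
  set pol : Polynomial ℤ := C (n : ℤ) * (C s * (px * px.comp (X ^ K)) - C t)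
      + pw * (C u * (py * py.comp (X ^ K)) + C v) with hpol
  have hζ0 : aeval ζ pol = 0 := by
    simp only [hpol, map_add, map_sub, map_mul, aeval_C, comp_conj hm hζm, hw_eval, eq_intCast, hK,
      map_intCast]
    rw [← hpx]
    rw [show Polynomial.aeval ζ py = (y : ℂ) from hpy.symm]
    linear_combination ((n : ℤ) : ℂ) * hrel
  have hξ0 : aeval ξ pol = 0 := eval_zero_of_zero hR hζR σ hσ pol hζ0
  apply mul_left_cancel₀ hn0
  simp only [hpol, map_add, map_sub, map_mul, aeval_C, comp_conj hm hξm, hw_eval, eq_intCast, hK,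
    map_intCast] at hξ0
  rw [← hpxσ, ← hpyσ] at hξ0
  linear_combination hξ0

end Stmt19Aux

open Stmt19Aux in
/-- For the unitary group `Γ` of the hermitian form `diag(-1, w)` over `ℤ[ζ]` (with
`w(ζ) > 0` and `w(ξ) < 0` for the other primitive `m`-th roots of unity `ξ`), every
`A = [[a,b],[c,d]] ∈ Γ` satisfies `|a(ζ)| ≥ 1`, and `|a(ξ)| ≤ 1`,
`|c(ξ)|² < (-w(ξ))⁻¹` for the Galois conjugates at `ξ ∉ {ζ, ζ̄}`; consequently `Γ` is a
discrete subgroup of `GL(2, ℂ)`. -/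
theorem stmt_19 (m : ℕ) (hm : 3 ≤ m)
    (ζ : ℂ) (hζ : ζ = Complex.exp (2 * Real.pi * Complex.I / (m : ℂ)))
    (R : Subalgebra ℤ ℂ) (hR : R = Algebra.adjoin ℤ {ζ}) (hζR : ζ ∈ R)
    (q : Polynomial ℚ) (w : ℂ) (hw : w = Polynomial.aeval ζ q)
    (hwreal : w.im = 0) (hwpos : 0 < w.re)
    (hwneg : ∀ ξ : ℂ, IsPrimitiveRoot ξ m → ξ ≠ ζ → ξ ≠ (starRingEnd ℂ) ζ →
      (Polynomial.aeval ξ q).im = 0 ∧ (Polynomial.aeval ξ q).re < 0)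
    (Γ : Set (Matrix (Fin 2) (Fin 2) ℂ))
    (hΓ : Γ = {A | (∀ i j, A i j ∈ R) ∧
      (∃ B : Matrix (Fin 2) (Fin 2) ℂ, (∀ i j, B i j ∈ R) ∧ A * B = 1 ∧ B * A = 1) ∧
      Matrix.diagonal ![(-1 : ℂ), w]
        = A.transpose * Matrix.diagonal ![(-1 : ℂ), w] * A.map (starRingEnd ℂ)}) :
    (∀ a b c d : R,
      !![(a : ℂ), (b : ℂ); (c : ℂ), (d : ℂ)] ∈ Γ →
        1 ≤ ‖(a : ℂ)‖ ∧
        ∀ ξ : ℂ, IsPrimitiveRoot ξ m → ξ ≠ ζ → ξ ≠ (starRingEnd ℂ) ζ →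
          ∀ σ : R →+* ℂ, σ ⟨ζ, hζR⟩ = ξ →
            ‖σ a‖ ≤ 1 ∧
            ‖σ c‖ ^ 2 < (-(Polynomial.aeval ξ q).re)⁻¹) ∧
    DiscreteTopology ↥Γ := by
  have hm0 : m ≠ 0 := by omega
  have hζprim : IsPrimitiveRoot ζ m := by
    rw [hζ]; exact Complex.isPrimitiveRoot_exp m hm0
  have hζm : ζ ^ m = 1 := hζprim.pow_eq_one
  have hζint : IsIntegral ℤ ζ := hζprim.isIntegral (Nat.pos_of_ne_zero hm0)
  -- extract the two basic identities from membership in Γ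
  have hEqs : ∀ a b c d : R, !![(a : ℂ), (b : ℂ); (c : ℂ), (d : ℂ)] ∈ Γ →
      ((1 : ℤ) : ℂ) * ((a : ℂ) * (starRingEnd ℂ) (a : ℂ))
        + aeval ζ q * (((-1 : ℤ) : ℂ) * ((c : ℂ) * (starRingEnd ℂ) (c : ℂ)) + ((0 : ℤ) : ℂ))
        = ((1 : ℤ) : ℂ) ∧
      ((-1 : ℤ) : ℂ) * ((b : ℂ) * (starRingEnd ℂ) (b : ℂ))
        + aeval ζ q * (((1 : ℤ) : ℂ) * ((d : ℂ) * (starRingEnd ℂ) (d : ℂ)) + ((-1 : ℤ) : ℂ))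
        = ((0 : ℤ) : ℂ) := by
    intro a b c d hA
    rw [hΓ] at hA
    obtain ⟨hmem, hinv, heq⟩ := hA
    have h00 := congrFun (congrFun heq 0) 0
    have h11 := congrFun (congrFun heq 1) 1
    simp [Matrix.mul_apply, Fin.sum_univ_two, Matrix.diagonal, Matrix.transpose_apply,
      Matrix.vecHead, Matrix.vecTail, Matrix.map_apply] at h00 h11
    rw [← hw]
    push_cast
    constructor
    · linear_combination h00
    · linear_combination -h11
  -- the key transferred real identities
  have key : ∀ (ξ : ℂ), ξ ^ m = 1 → (aeval ξ q).im = 0 → ∀ σ : R →+* ℂ, σ ⟨ζ, hζR⟩ = ξ →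
      ∀ a b c d : R, !![(a : ℂ), (b : ℂ); (c : ℂ), (d : ℂ)] ∈ Γ →
      Complex.normSq (σ a) = 1 + (aeval ξ q).re * Complex.normSq (σ c) ∧
      Complex.normSq (σ b) = (aeval ξ q).re * (Complex.normSq (σ d) - 1) := by
    intro ξ hξm him σ hσ a b c d hA
    obtain ⟨h1, h2⟩ := hEqs a b c d hA
    have t1 := rel_transfer hm0 hζm hξm hR hζR q a c 1 (-1) 0 1 h1 σ hσ
    have t2 := rel_transfer hm0 hζm hξm hR hζR q b d (-1) 1 (-1) 0 h2 σ hσ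
    have hWre : ((aeval ξ q).re : ℂ) = aeval ξ q := by
      exact Complex.ext (by simp) (by simp [him])
    rw [Complex.mul_conj, Complex.mul_conj] at t1 t2
    rw [← hWre] at t1 t2
    push_cast at t1 t2
    constructor
    · exact_mod_cast (by linear_combination t1 : ((Complex.normSq (σ a) : ℂ))
        = 1 + ((aeval ξ q).re : ℂ) * Complex.normSq (σ c))
    · exact_mod_cast (by linear_combination -t2 : ((Complex.normSq (σ b) : ℂ))
        = ((aeval ξ q).re : ℂ) * (Complex.normSq (σ d) - 1))
  have hwq : (aeval ζ q).re = w.re ∧ (aeval ζ q).im = 0 := by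
    rw [← hw]; exact ⟨rfl, hwreal⟩
  -- part 1 statement, as a standalone fact
  have part1 : ∀ a b c d : R, !![(a : ℂ), (b : ℂ); (c : ℂ), (d : ℂ)] ∈ Γ →
      1 ≤ ‖(a : ℂ)‖ := by
    intro a b c d hA
    have hid : (R.val.toRingHom : R →+* ℂ) ⟨ζ, hζR⟩ = ζ := rfl
    have hk := (key ζ hζm hwq.2 R.val.toRingHom hid a b c d hA).1
    have hval : ∀ x : R, R.val.toRingHom x = (x : ℂ) := fun x => rfl
    rw [hval, hval, hwq.1] at hk
    have h1 : 1 ≤ Complex.normSq (a : ℂ) := by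
      nlinarith [Complex.normSq_nonneg (c : ℂ), hwpos]
    rw [← Complex.sq_norm] at h1
    nlinarith [norm_nonneg (a : ℂ)]
  refine ⟨?_, ?_⟩
  · -- parts 1 and 2
    intro a b c d hA
    refine ⟨part1 a b c d hA, ?_⟩
    intro ξ hξprim hne1 hne2 σ hσ
    obtain ⟨him, hneg⟩ := hwneg ξ hξprim hne1 hne2
    have hk := key ξ hξprim.pow_eq_one him σ hσ a b c d hA
    have ha0 : (a : ℂ) ≠ 0 := by
      intro h
      have := part1 a b c d hA
      rw [h, norm_zero] at this; norm_num at this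
    have hσa : σ a ≠ 0 := sigma_ne_zero hR hζR hζint σ a ha0
    have hσa2 : 0 < Complex.normSq (σ a) := Complex.normSq_pos.mpr hσa
    have hc : Complex.normSq (σ c) * (-(aeval ξ q).re) < 1 := by nlinarith [hk.1]
    constructor
    · have h1 : Complex.normSq (σ a) ≤ 1 := by
        nlinarith [Complex.normSq_nonneg (σ c), hk.1]
      rw [← Complex.sq_norm] at h1
      nlinarith [norm_nonneg (σ a)]
    · rw [Complex.sq_norm]
      have hWpos : 0 < -(aeval ξ q).re := by linarith
      rw [← mul_lt_mul_iff_of_pos_right hWpos]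
      rw [inv_mul_cancel₀ (ne_of_gt hWpos)]
      exact hc
  · -- discreteness
    classical
    set K : IntermediateField ℚ ℂ := IntermediateField.adjoin ℚ {ζ} with hK
    have hζK : ζ ∈ K := IntermediateField.subset_adjoin ℚ {ζ} rfl
    haveI : FiniteDimensional ℚ K :=
      IntermediateField.adjoin.finiteDimensional (hζint.tower_top)
    haveI : NumberField K := ⟨⟩
    have hRK : ∀ x : R, (x : ℂ) ∈ K := by
      intro x
      have hle : R ≤ Subalgebra.restrictScalars ℤ K.toSubalgebra := by
        rw [hR]
        apply Algebra.adjoin_le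
        intro z hz
        rw [Set.mem_singleton_iff] at hz
        subst hz
        exact hζK
      exact hle x.2
    let eRK : R →+* K :=
      { toFun := fun x => ⟨(x : ℂ), hRK x⟩
        map_one' := rfl
        map_mul' := fun _ _ => rfl
        map_zero' := rfl
        map_add' := fun _ _ => rfl }
    set W : ℂ → ℝ := fun ξ => (aeval ξ q).re with hWdef
    set B₁ : ℝ := 1 + ∑ ξ ∈ primitiveRoots m ℂ, (|W ξ| + |(W ξ)⁻¹|) with hB₁
    have hB₁sum : ∀ ξ ∈ primitiveRoots m ℂ, |W ξ| + |(W ξ)⁻¹| ≤ B₁ - 1 := by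
      intro ξ hξ
      have := Finset.single_le_sum (f := fun ξ => |W ξ| + |(W ξ)⁻¹|)
        (fun i _ => by positivity) hξ
      rw [hB₁]; linarith
    have hB₁1 : (1 : ℝ) ≤ B₁ := by
      have : (0 : ℝ) ≤ ∑ ξ ∈ primitiveRoots m ℂ, (|W ξ| + |(W ξ)⁻¹|) :=
        Finset.sum_nonneg fun i _ => by positivity
      rw [hB₁]; linarith
    rw [discreteTopology_subtype_iff]
    intro A₀ hA₀
    set C₀ : ℝ := ‖A₀ 0 0‖ + ‖A₀ 0 1‖ + ‖A₀ 1 0‖ + ‖A₀ 1 1‖ + 1 with hC₀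
    have hC₀ent : ∀ i j, ‖A₀ i j‖ + 1 ≤ C₀ := by
      simp only [hC₀, Fin.forall_fin_two]
      refine ⟨⟨?_, ?_⟩, ?_, ?_⟩ <;>
        linarith only [norm_nonneg (A₀ 0 0), norm_nonneg (A₀ 0 1), norm_nonneg (A₀ 1 0),
          norm_nonneg (A₀ 1 1)]
    set B : ℝ := max C₀ B₁ with hB
    have hTfin := NumberField.Embeddings.finite_of_norm_le K ℂ B
    set F : Set ℂ := (fun z : K => (z : ℂ)) ''
      {x : K | IsIntegral ℤ x ∧ ∀ φ : K →+* ℂ, ‖φ x‖ ≤ B} with hF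
    have hFfin : F.Finite := hTfin.image _
    set N : Set (Matrix (Fin 2) (Fin 2) ℂ) :=
      Set.univ.pi (fun i : Fin 2 => Set.univ.pi fun j : Fin 2 => Metric.ball (A₀ i j) 1) with hN
    have hNopen : IsOpen N := by
      apply isOpen_set_pi Set.finite_univ
      intro i _
      exact isOpen_set_pi Set.finite_univ fun j _ => Metric.isOpen_ball
    have hA₀N : A₀ ∈ N := by
      rw [hN]
      show ∀ i ∈ Set.univ, A₀ i ∈ Set.univ.pi fun j => Metric.ball (A₀ i j) 1
      intro i _
      rw [Set.mem_pi]
      intro j _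
      simp [Metric.mem_ball]
    have hRint : ∀ x : R, IsIntegral ℤ (x : ℂ) := by
      intro x
      have hle : R ≤ integralClosure ℤ ℂ := by
        rw [hR]; exact Algebra.adjoin_le (by simpa [mem_integralClosure_iff] using hζint)
      exact hle x.2
    have hbound : ∀ A ∈ Γ, A ∈ N → ∀ i j, A i j ∈ F := by
      intro A hAΓ hAN i j
      have hmemR : ∀ i j, A i j ∈ R := (hΓ ▸ hAΓ).1
      have hnear : ∀ i j, ‖A i j - A₀ i j‖ < 1 := by
        intro i j
        rw [hN] at hAN
        have hAN : ∀ i ∈ Set.univ, A i ∈ Set.univ.pi fun j => Metric.ball (A₀ i j) 1 := hAN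
        have := (Set.mem_pi.mp (hAN i (Set.mem_univ i))) j (Set.mem_univ j)
        rwa [Metric.mem_ball, dist_eq_norm] at this
      have hCbnd : ∀ i j, ‖A i j‖ ≤ C₀ := by
        intro i j
        have h1 := norm_sub_norm_le (A i j) (A₀ i j)
        have h2 := hnear i j
        have h3 := hC₀ent i j
        linarith only [h1, h2, h3]
      set a : R := ⟨A 0 0, hmemR 0 0⟩ with ha
      set b : R := ⟨A 0 1, hmemR 0 1⟩ with hb
      set c : R := ⟨A 1 0, hmemR 1 0⟩ with hc
      set d : R := ⟨A 1 1, hmemR 1 1⟩ with hd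
      have hmat : A = !![(a : ℂ), (b : ℂ); (c : ℂ), (d : ℂ)] := by
        ext i j
        fin_cases i <;> fin_cases j <;> rfl
      have hAΓ' : !![(a : ℂ), (b : ℂ); (c : ℂ), (d : ℂ)] ∈ Γ := hmat ▸ hAΓ
      refine ⟨eRK ⟨A i j, hmemR i j⟩, ⟨?_, ?_⟩, rfl⟩
      · -- integrality
        have hf : Function.Injective
            ((K.val : K →ₐ[ℚ] ℂ).toRingHom.toIntAlgHom : K →ₐ[ℤ] ℂ) :=
          (K.val : K →ₐ[ℚ] ℂ).toRingHom.injective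
        refine (isIntegral_algHom_iff _ hf).mp ?_
        exact hRint ⟨A i j, hmemR i j⟩
      · -- bounds at all embeddings
        intro φ
        set σ : R →+* ℂ := φ.comp eRK with hσdef
        set ξ : ℂ := φ ⟨ζ, hζK⟩ with hξdef
        have hσζ : σ ⟨ζ, hζR⟩ = ξ := rfl
        have hξprim : IsPrimitiveRoot ξ m := by
          have h1 : IsPrimitiveRoot (⟨ζ, hζK⟩ : K) m := by
            apply IsPrimitiveRoot.of_map_of_injective
              (f := (K.val : K →ₐ[ℚ] ℂ).toRingHom)
            · exact hζprim
            · exact (K.val : K →ₐ[ℚ] ℂ).toRingHom.injective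
          exact h1.map_of_injective φ.injective
        have hξm : ξ ^ m = 1 := hξprim.pow_eq_one
        have hgoal : ∀ x : R, ‖φ (eRK x)‖ = ‖σ x‖ := fun _ => rfl
        show ‖σ (⟨A i j, hmemR i j⟩ : R)‖ ≤ B
        by_cases hcase1 : ξ = ζ
        · obtain ⟨p, hp1, hp2⟩ := transfer hR hζR σ hσζ (⟨A i j, hmemR i j⟩ : R)
          rw [hp2, hcase1, ← hp1]
          exact le_trans (by linarith only [hCbnd i j] : ‖A i j‖ ≤ C₀) (le_max_left _ _)
        by_cases hcase2 : ξ = (starRingEnd ℂ) ζ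
        · obtain ⟨p, hp1, hp2⟩ := transfer hR hζR σ hσζ (⟨A i j, hmemR i j⟩ : R)
          rw [hp2, hcase2, Stmt19Aux.aeval_conj, ← hp1]
          rw [RCLike.norm_conj]
          exact le_trans (by linarith only [hCbnd i j] : ‖A i j‖ ≤ C₀) (le_max_left _ _)
        · obtain ⟨him, hneg⟩ := hwneg ξ hξprim hcase1 hcase2
          have hk := key ξ hξm him σ hσζ a b c d hAΓ'
          have hWξ : W ξ = (aeval ξ q).re := rfl
          rw [← hWξ] at hk hneg
          have hWmem : ξ ∈ primitiveRoots m ℂ :=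
            (mem_primitiveRoots (Nat.pos_of_ne_zero hm0)).mpr hξprim
          have hWabs := hB₁sum ξ hWmem
          have habs1 : |W ξ| = -(W ξ) := abs_of_neg hneg
          have habs2 : |(W ξ)⁻¹| = (-(W ξ))⁻¹ := by
            rw [abs_of_neg (inv_lt_zero.mpr hneg)]
            rw [← inv_neg]
          have hWpos : (0 : ℝ) < -(W ξ) := by linarith only [hneg]
          have hinvmul : (-(W ξ)) * (-(W ξ))⁻¹ = 1 := mul_inv_cancel₀ (ne_of_gt hWpos)
          have hnsa : Complex.normSq (σ a) ≤ 1 := by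
            nlinarith only [hk.1, Complex.normSq_nonneg (σ c), hneg]
          have hnsd : Complex.normSq (σ d) ≤ 1 := by
            nlinarith only [hk.2, Complex.normSq_nonneg (σ b), hneg]
          have hnsc : Complex.normSq (σ c) ≤ (-(W ξ))⁻¹ := by
            nlinarith only [hk.1, Complex.normSq_nonneg (σ a), hinvmul, hWpos]
          have hnsb : Complex.normSq (σ b) ≤ -(W ξ) := by
            have hdd : W ξ * Complex.normSq (σ d) ≤ 0 :=
              mul_nonpos_iff.mpr (Or.inr ⟨le_of_lt hneg, Complex.normSq_nonneg _⟩)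
            linarith only [hk.2, hdd]
          -- convert normSq bounds into norm bounds by `r ≤ 1 + r²`
          have hnorm : ∀ z : ℂ, ‖z‖ ≤ 1 + Complex.normSq z := by
            intro z
            have h1 : Complex.normSq z = ‖z‖ ^ 2 := by
              rw [Complex.normSq_eq_norm_sq]
            nlinarith only [h1, norm_nonneg z]
          have hB₁le : B₁ ≤ B := le_max_right _ _
          have hfin : ∀ x : R, Complex.normSq (σ x) ≤ B₁ - 1 → ‖σ x‖ ≤ B := by
            intro x hx
            have := hnorm (σ x)
            linarith only [this, hx, hB₁le]
          have hfin1 : ∀ x : R, Complex.normSq (σ x) ≤ 1 → ‖σ x‖ ≤ B := by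
            intro x hx
            have h1 : Complex.normSq (σ x) = ‖σ x‖ ^ 2 := by
              rw [Complex.normSq_eq_norm_sq]
            have h2 : ‖σ x‖ ≤ 1 := by nlinarith only [h1, hx, norm_nonneg (σ x)]
            have : (1 : ℝ) ≤ B := le_trans hB₁1 hB₁le
            linarith only [h2, this]
          have hbB : ‖σ b‖ ≤ B := by
            apply hfin b
            rw [← habs1] at hnsb
            exact hnsb.trans ((le_add_of_nonneg_right (abs_nonneg ((W ξ)⁻¹))).trans hWabs)
          have hcB : ‖σ c‖ ≤ B := by
            apply hfin c
            rw [← habs2] at hnsc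
            exact hnsc.trans ((le_add_of_nonneg_left (abs_nonneg (W ξ))).trans hWabs)
          fin_cases i <;> fin_cases j
          · exact hfin1 a hnsa
          · exact hbB
          · exact hcB
          · exact hfin1 d hnsd
    have hbig : {A : Matrix (Fin 2) (Fin 2) ℂ | ∀ i j, A i j ∈ F}.Finite := by
      apply Set.Finite.subset (Set.Finite.pi fun i : Fin 2 => Set.Finite.pi fun j : Fin 2 => hFfin)
      intro A hA
      rw [Set.mem_pi]
      intro i _
      rw [Set.mem_pi]
      intro j _
      exact hA i j
    have hSfin : ((Γ ∩ N) \ {A₀}).Finite :=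
      Set.Finite.subset hbig (by
        rintro A ⟨⟨hAΓ, hAN⟩, -⟩
        exact fun i j => hbound A hAΓ hAN i j)
    have hSclosed : IsClosed ((Γ ∩ N) \ {A₀}) := hSfin.isClosed
    set O : Set (Matrix (Fin 2) (Fin 2) ℂ) := N ∩ ((Γ ∩ N) \ {A₀})ᶜ with hO
    have hA₀O : A₀ ∈ O := ⟨hA₀N, fun h => h.2 rfl⟩
    have hOopen : IsOpen O := hNopen.inter hSclosed.isOpen_compl
    have h1 : 𝓝 A₀ ≤ Filter.principal O := Filter.le_principal_iff.mpr (hOopen.mem_nhds hA₀O)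
    have hempty : (O ∩ {A₀}ᶜ) ∩ Γ = ∅ := by
      ext y
      simp only [Set.mem_inter_iff, Set.mem_compl_iff, Set.mem_empty_iff_false, iff_false,
        Set.mem_singleton_iff, not_and]
      rintro ⟨⟨hyN, hyc⟩, hyne⟩ hyΓ
      exact hyc ⟨⟨hyΓ, hyN⟩, hyne⟩
    refine le_bot_iff.mp ?_
    calc 𝓝[≠] A₀ ⊓ Filter.principal Γ
        = (𝓝 A₀ ⊓ Filter.principal {A₀}ᶜ) ⊓ Filter.principal Γ := rfl
      _ ≤ (Filter.principal O ⊓ Filter.principal {A₀}ᶜ) ⊓ Filter.principal Γ :=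
          inf_le_inf_right _ (inf_le_inf_right _ h1)
      _ = Filter.principal ((O ∩ {A₀}ᶜ) ∩ Γ) := by rw [inf_principal, inf_principal]
      _ = ⊥ := by rw [hempty, Filter.principal_empty]
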